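/- Verification Theorem, part (iii), second case: If every switching cost g_ij is a constant (independent of (t,x)), then the optimal strategy is almost surely finite: P({ω : τ*_n(ω) < T for all n ≥ 1}) = 0. -/

import Mathlib

open MeasureTheory Set Filter
open scoped ENNReal
open scoped Topology

noncomputable section

namespace Switching

/-- Maximum of `f` over the indices `j ≠ i` (the inter-connected obstacle). -/
def maxNe {m : ℕ} (i : Fin m) (f : Fin m → ℝ) : ℝ :=
  ⨆ j : {j : Fin m // j ≠ i}, f (j : Fin m)

variable {Ω : Type*}

/-- The payoff functional `∫_t^τ ψ_i(s,X_s) ds + max_{j≠i}(-g_{ij}(τ,X_τ) + Y^j_τ) 1_{[τ<T]}`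
appearing in the Snell envelope characterization of the value processes. -/
def reward {k m : ℕ} (T : ℝ) (X : ℝ → Ω → EuclideanSpace ℝ (Fin k))
    (ψ : Fin m → ℝ → EuclideanSpace ℝ (Fin k) → ℝ)
    (g : Fin m → Fin m → ℝ → EuclideanSpace ℝ (Fin k) → ℝ)
    (Y : Fin m → ℝ → Ω → ℝ)
    (i : Fin m) (t : ℝ) (τ : Ω → ℝ) (ω : Ω) : ℝ :=
  (∫ s in Ioc t (τ ω), ψ i s (X s ω)) +
    indicator {ω' | τ ω' < T}
      (fun ω' => maxNe i fun j => -(g i j (τ ω') (X (τ ω') ω')) + Y j (τ ω') ω') ω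

/-- `Y` is the system of Snell-envelope value processes:  for every mode `i` and every
`t ∈ [0,T]`, `Y^i_t` is (a.s.) the least `F_t`-measurable random variable dominating
`E[∫_t^τ ψ_i(s,X_s) ds + max_{j≠i}(-g_{ij}(τ,X_τ)+Y^j_τ) 1_{[τ<T]} | F_t]` over all
stopping times `t ≤ τ ≤ T`. -/
def SnellSystem {m0 : MeasurableSpace Ω} {k m : ℕ} (T : ℝ) (μ : Measure Ω)
    (ℱ : Filtration ℝ m0) (X : ℝ → Ω → EuclideanSpace ℝ (Fin k))
    (ψ : Fin m → ℝ → EuclideanSpace ℝ (Fin k) → ℝ)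
    (g : Fin m → Fin m → ℝ → EuclideanSpace ℝ (Fin k) → ℝ)
    (Y : Fin m → ℝ → Ω → ℝ) : Prop :=
  ∀ i : Fin m, ∀ t ∈ Icc (0 : ℝ) T,
    (∀ τ : Ω → ℝ, IsStoppingTime ℱ (fun ω => ((τ ω : ℝ) : WithTop ℝ)) → (∀ ω, τ ω ∈ Icc t T) →
      ∀ᵐ ω ∂μ, (μ[reward T X ψ g Y i t τ | ℱ t]) ω ≤ Y i t ω) ∧
    (∀ Z : Ω → ℝ, Measurable[ℱ t] Z →
      (∀ τ : Ω → ℝ, IsStoppingTime ℱ (fun ω => ((τ ω : ℝ) : WithTop ℝ)) → (∀ ω, τ ω ∈ Icc t T) →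
        ∀ᵐ ω ∂μ, (μ[reward T X ψ g Y i t τ | ℱ t]) ω ≤ Z ω) →
      ∀ᵐ ω ∂μ, Y i t ω ≤ Z ω)

/-- An admissible switching strategy: a nondecreasing sequence of `[0,T]`-valued stopping
times `τ_n` (with the convention `τ_0 = 0`) together with `F_{τ_n}`-measurable mode choices
`ξ_n` (`ξ_0` being the initial mode). -/
structure Strategy {m0 : MeasurableSpace Ω} (T : ℝ) (ℱ : Filtration ℝ m0) (m : ℕ) where
  τ : ℕ → Ω → ℝ
  ξ : ℕ → Ω → Fin m
  τ_zero : ∀ ω, τ 0 ω = 0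
  τ_mono : ∀ ω, Monotone fun n => τ n ω
  τ_mem : ∀ n ω, τ n ω ∈ Icc (0 : ℝ) T
  τ_stop : ∀ n, IsStoppingTime ℱ (fun ω => ((τ n ω : ℝ) : WithTop ℝ))
  ξ_meas : ∀ n j, MeasurableSet[(τ_stop n).measurableSpace] {ω | ξ n ω = j}

variable {m0 : MeasurableSpace Ω} {T : ℝ} {ℱ : Filtration ℝ m0} {k m : ℕ}

/-- The mode indicator process `u_t` of a strategy: `u_t = ξ_n` on `(τ_n, τ_{n+1}]`
(and `u_t = ξ_0` on `[0, τ_1]`). -/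
def Strategy.mode (S : Strategy T ℱ m) (t : ℝ) (ω : Ω) : Fin m :=
  S.ξ (sSup {n | S.τ n ω < t}) ω

/-- The `n`-th switching cost `g_{ξ_{n-1} ξ_n}(τ_n, X_{τ_n}) 1_{[τ_n < T]}` (indexed so that
`cost g X n` is the cost of the `(n+1)`-st switch). -/
def Strategy.cost (S : Strategy T ℱ m)
    (g : Fin m → Fin m → ℝ → EuclideanSpace ℝ (Fin k) → ℝ)
    (X : ℝ → Ω → EuclideanSpace ℝ (Fin k)) (n : ℕ) (ω : Ω) : ℝ :=
  indicator {ω' | S.τ (n + 1) ω' < T}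
    (fun ω' => g (S.ξ n ω') (S.ξ (n + 1) ω') (S.τ (n + 1) ω') (X (S.τ (n + 1) ω') ω')) ω

/-- The reverse switching cost `g_{ξ_n ξ_{n-1}}(τ_n, X_{τ_n}) 1_{[τ_n < T]}`. -/
def Strategy.revCost (S : Strategy T ℱ m)
    (g : Fin m → Fin m → ℝ → EuclideanSpace ℝ (Fin k) → ℝ)
    (X : ℝ → Ω → EuclideanSpace ℝ (Fin k)) (n : ℕ) (ω : Ω) : ℝ :=
  indicator {ω' | S.τ (n + 1) ω' < T}
    (fun ω' => g (S.ξ (n + 1) ω') (S.ξ n ω') (S.τ (n + 1) ω') (X (S.τ (n + 1) ω') ω')) ω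

/-- Total switching cost, as an extended nonnegative real (so that infinite total cost is
represented faithfully). -/
def Strategy.costENN (S : Strategy T ℱ m)
    (g : Fin m → Fin m → ℝ → EuclideanSpace ℝ (Fin k) → ℝ)
    (X : ℝ → Ω → EuclideanSpace ℝ (Fin k)) (ω : Ω) : ℝ≥0∞ :=
  ∑' n : ℕ, ENNReal.ofReal (S.cost g X n ω)

/-- The expected total profit `J(δ,ξ)` of a strategy. -/
def profit (μ : Measure Ω) (X : ℝ → Ω → EuclideanSpace ℝ (Fin k))
    (ψ : Fin m → ℝ → EuclideanSpace ℝ (Fin k) → ℝ)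
    (g : Fin m → Fin m → ℝ → EuclideanSpace ℝ (Fin k) → ℝ)
    (S : Strategy T ℱ m) : ℝ :=
  ∫ ω, ((∫ s in Ioc (0 : ℝ) T, ψ (S.mode s ω) s (X s ω)) - ∑' n : ℕ, S.cost g X n ω) ∂μ

/-- The candidate optimal strategy `(δ*, u*)` built from the value processes `Y`:
`τ*_{n+1}` is the first time after `τ*_n` at which the current value process touches its
inter-connected obstacle (truncated at `T`), and the new mode attains the maximum there. -/
structure OptStrat (T : ℝ) (ℱ : Filtration ℝ m0)
    (X : ℝ → Ω → EuclideanSpace ℝ (Fin k))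
    (g : Fin m → Fin m → ℝ → EuclideanSpace ℝ (Fin k) → ℝ)
    (Y : Fin m → ℝ → Ω → ℝ) (i0 : Fin m) extends Strategy T ℱ m where
  start : ∀ ω, ξ 0 ω = i0
  hitting : ∀ n ω, τ (n + 1) ω =
    min (sInf {s : ℝ | τ n ω ≤ s ∧
      Y (ξ n ω) s ω = maxNe (ξ n ω) fun j => -(g (ξ n ω) j s (X s ω)) + Y j s ω}) T
  switch_ne : ∀ n ω, τ (n + 1) ω < T → ξ (n + 1) ω ≠ ξ n ω
  switch_attain : ∀ n ω, τ (n + 1) ω < T →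
    Y (ξ n ω) (τ (n + 1) ω) ω =
      -(g (ξ n ω) (ξ (n + 1) ω) (τ (n + 1) ω) (X (τ (n + 1) ω) ω)) +
        Y (ξ (n + 1) ω) (τ (n + 1) ω) ω

/-- The standing hypotheses of the optimal multi-modes switching problem. -/
structure Hyps {m0 : MeasurableSpace Ω} {k m : ℕ} (T α : ℝ) (μ : Measure Ω)
    (ℱ : Filtration ℝ m0) (X : ℝ → Ω → EuclideanSpace ℝ (Fin k))
    (ψ : Fin m → ℝ → EuclideanSpace ℝ (Fin k) → ℝ)
    (g : Fin m → Fin m → ℝ → EuclideanSpace ℝ (Fin k) → ℝ)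
    (Y : Fin m → ℝ → Ω → ℝ) : Prop where
  prob : IsProbabilityMeasure μ
  right_cont : ∀ t : ℝ, ℱ t = ⨅ s : {s : ℝ // t < s}, ℱ (s : ℝ)
  X_cont : ∀ ω, ContinuousOn (fun t => X t ω) (Icc 0 T)
  X_adapted : ∀ t : ℝ, Measurable[ℱ t] (X t)
  ψ_cont : ∀ i, ContinuousOn (fun p : ℝ × EuclideanSpace ℝ (Fin k) => ψ i p.1 p.2)
    (Icc 0 T ×ˢ univ)
  g_cont : ∀ i j, ContinuousOn (fun p : ℝ × EuclideanSpace ℝ (Fin k) => g i j p.1 p.2)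
    (Icc 0 T ×ˢ univ)
  ψ_int : ∀ i, Integrable (fun ω => ∫ s in Icc (0 : ℝ) T, (ψ i s (X s ω)) ^ 2) μ
  g_int : ∀ i j, Integrable (fun ω => ⨆ t : Icc (0 : ℝ) T, (g i j (t : ℝ) (X (t : ℝ) ω)) ^ 2) μ
  Y_int : ∀ i, Integrable (fun ω => ⨆ t : Icc (0 : ℝ) T, (Y i (t : ℝ) ω) ^ 2) μ
  g_diag : ∀ i, ∀ t ∈ Icc (0 : ℝ) T, ∀ x, g i i t x = 0
  g_nonneg : ∀ i j, ∀ t ∈ Icc (0 : ℝ) T, ∀ x, 0 ≤ g i j t x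
  g_triangle : ∀ i j l, j ≠ i → l ≠ i → l ≠ j → ∀ t ∈ Icc (0 : ℝ) T, ∀ x,
    g i l t x < g i j t x + g j l t x
  g_alpha : ∀ i j, i ≠ j → ∀ t ∈ Icc (0 : ℝ) T, ∀ x, α < g i j t x + g j i t x
  Y_cont : ∀ i ω, ContinuousOn (fun t => Y i t ω) (Icc 0 T)
  Y_adapted : ∀ i, ∀ t : ℝ, Measurable[ℱ t] (Y i t)
  Y_T : ∀ i ω, Y i T ω = 0
  snell : SnellSystem T μ ℱ X ψ g Y

set_option maxHeartbeats 1600000 in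
/-- **Verification Theorem, part (iii), second case.**  If every switching cost `g_{ij}` is a
constant (independent of `(t,x)`), then the optimal strategy is almost surely finite:
`P({ω : τ*_n(ω) < T for all n ≥ 1}) = 0`. -/
theorem verification_theorem_part_iii_constant_costs
    {Ω : Type*} {m0 : MeasurableSpace Ω} {k m : ℕ} {T α : ℝ}
    {μ : Measure Ω} {ℱ : Filtration ℝ m0}
    {X : ℝ → Ω → EuclideanSpace ℝ (Fin k)}
    {ψ : Fin m → ℝ → EuclideanSpace ℝ (Fin k) → ℝ}
    {g : Fin m → Fin m → ℝ → EuclideanSpace ℝ (Fin k) → ℝ}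
    {Y : Fin m → ℝ → Ω → ℝ}
    (hT : 0 < T) (hk : 1 ≤ k) (hm : 2 ≤ m) (hα : 0 < α)
    (H : Hyps T α μ ℱ X ψ g Y)
    (hconst : ∀ i j, ∀ t x t' x', g i j t x = g i j t' x')
    (i0 : Fin m) (hi0 : i0 = ⟨0, by omega⟩)
    (S : OptStrat T ℱ X g Y i0) :
    μ {ω | ∀ n : ℕ, S.τ (n + 1) ω < T} = 0 := by
  have hempty : {ω | ∀ n : ℕ, S.τ (n + 1) ω < T} = ∅ := by
    rw [Set.eq_empty_iff_forall_notMem]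
    intro ω hω
    simp only [Set.mem_setOf_eq] at hω
    have h0T : (0 : ℝ) ∈ Icc (0 : ℝ) T := ⟨le_refl 0, hT.le⟩
    -- constant costs
    set c : Fin m → Fin m → ℝ := fun i j => g i j 0 0 with hc
    -- the limit of the switching times
    have hbdd : BddAbove (Set.range fun n => S.τ n ω) := by
      refine ⟨T, ?_⟩
      rintro _ ⟨n, rfl⟩
      exact (S.τ_mem n ω).2
    set t' : ℝ := ⨆ n, S.τ n ω with ht'def
    have htend : Tendsto (fun n => S.τ n ω) atTop (𝓝 t') :=
      tendsto_atTop_ciSup (S.τ_mono ω) hbdd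
    have ht'mem : t' ∈ Icc (0 : ℝ) T := by
      constructor
      · have := le_ciSup hbdd 0
        rw [S.τ_zero ω] at this
        exact this
      · exact ciSup_le fun n => (S.τ_mem n ω).2
    set y : Fin m → ℝ := fun i => Y i t' ω with hy
    have hYtend : ∀ i, Tendsto (fun n => Y i (S.τ n ω) ω) atTop (𝓝 (y i)) := by
      intro i
      have hcw : ContinuousWithinAt (fun t => Y i t ω) (Icc 0 T) t' :=
        H.Y_cont i ω t' ht'mem
      exact hcw.tendsto.comp
        (tendsto_nhdsWithin_of_tendsto_nhds_of_eventually_within _ htend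
          (Filter.Eventually.of_forall fun n => S.τ_mem n ω))
    set F : ℕ → Fin m × Fin m := fun n => (S.ξ n ω, S.ξ (n + 1) ω) with hF
    -- the key limit equation for transitions occurring infinitely often
    have hkey : ∀ n : ℕ, (F ⁻¹' {F n}).Infinite →
        y (S.ξ (n + 1) ω) = y (S.ξ n ω) + c (S.ξ n ω) (S.ξ (n + 1) ω) := by
      intro n hinf
      have hfreq : ∃ᶠ n' in atTop, F n' = F n := by
        rw [Filter.frequently_atTop]
        intro a
        obtain ⟨b, hb, hab⟩ := hinf.exists_gt a
        exact ⟨b, hab.le, hb⟩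
      obtain ⟨φ, hφ, hφeq⟩ := Filter.extraction_of_frequently_atTop hfreq
      have hφt : Tendsto (fun n' => φ n' + 1) atTop atTop :=
        tendsto_atTop_mono (fun n' => Nat.le_succ (φ n')) hφ.tendsto_atTop
      have heq : ∀ n', Y (S.ξ (n + 1) ω) (S.τ (φ n' + 1) ω) ω
          = Y (S.ξ n ω) (S.τ (φ n' + 1) ω) ω + c (S.ξ n ω) (S.ξ (n + 1) ω) := by
        intro n'
        have hp := hφeq n'
        simp only [hF, Prod.mk.injEq] at hp
        obtain ⟨h1, h2⟩ := hp
        have hat := S.switch_attain (φ n') ω (hω (φ n'))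
        rw [h1, h2] at hat
        have hg : g (S.ξ n ω) (S.ξ (n + 1) ω) (S.τ (φ n' + 1) ω) (X (S.τ (φ n' + 1) ω) ω)
            = c (S.ξ n ω) (S.ξ (n + 1) ω) := by
          rw [hc]; exact hconst _ _ _ _ 0 0
        rw [hg] at hat
        linarith [hat]
      have hA : Tendsto (fun n' => Y (S.ξ (n + 1) ω) (S.τ (φ n' + 1) ω) ω) atTop
          (𝓝 (y (S.ξ (n + 1) ω))) := (hYtend (S.ξ (n + 1) ω)).comp hφt
      have hB : Tendsto (fun n' => Y (S.ξ n ω) (S.τ (φ n' + 1) ω) ω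
            + c (S.ξ n ω) (S.ξ (n + 1) ω)) atTop
          (𝓝 (y (S.ξ n ω) + c (S.ξ n ω) (S.ξ (n + 1) ω))) :=
        ((hYtend (S.ξ n ω)).comp hφt).add_const _
      exact tendsto_nhds_unique (hA.congr heq) hB
    -- eventually every transition occurs infinitely often
    obtain ⟨N, hN⟩ : ∃ N : ℕ, ∀ n, N ≤ n → (F ⁻¹' {F n}).Infinite := by
      have hbad : {n : ℕ | (F ⁻¹' {F n}).Finite}.Finite := by
        have hsub : {n : ℕ | (F ⁻¹' {F n}).Finite} ⊆
            ⋃ p ∈ {p : Fin m × Fin m | (F ⁻¹' {p}).Finite}, F ⁻¹' {p} := by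
          intro n hn
          exact Set.mem_biUnion hn rfl
        exact Set.Finite.subset (Set.Finite.biUnion (Set.toFinite _) fun p hp => hp) hsub
      obtain ⟨M, hM⟩ := hbad.bddAbove
      refine ⟨M + 1, fun n hn => ?_⟩
      intro hfin
      have := hM hfin
      omega
    have hcnn : ∀ i j, 0 ≤ c i j := by
      intro i j; rw [hc]; exact H.g_nonneg i j 0 h0T 0
    have hstep : ∀ n, N ≤ n →
        y (S.ξ (n + 1) ω) = y (S.ξ n ω) + c (S.ξ n ω) (S.ξ (n + 1) ω) :=
      fun n hn => hkey n (hN n hn)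
    have hmono : ∀ p q, N ≤ p → p ≤ q → y (S.ξ p ω) ≤ y (S.ξ q ω) := by
      intro p q hp hpq
      induction q, hpq using Nat.le_induction with
      | base => exact le_refl _
      | succ q hq ih =>
        have h1 := hstep q (hp.trans hq)
        have h2 := hcnn (S.ξ q ω) (S.ξ (q + 1) ω)
        linarith
    -- pigeonhole: some mode occurs infinitely often beyond N
    obtain ⟨j, hj⟩ := Finite.exists_infinite_fiber (fun n : ℕ => S.ξ (N + n) ω)
    have hjinf : ((fun n : ℕ => S.ξ (N + n) ω) ⁻¹' {j}).Infinite :=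
      Set.infinite_coe_iff.mp hj
    obtain ⟨n0, hn0⟩ := hjinf.nonempty
    obtain ⟨n1, hn1mem, hn1⟩ := hjinf.exists_gt (n0 + 1)
    simp only [Set.mem_preimage, Set.mem_singleton_iff] at hn0 hn1mem
    set p0 : ℕ := N + n0 with hp0
    set p1 : ℕ := N + n1 with hp1
    have hNp0 : N ≤ p0 := Nat.le_add_right _ _
    have hp0p1 : p0 + 2 ≤ p1 := by omega
    have hyeq : y (S.ξ p0 ω) = y (S.ξ p1 ω) := by rw [hn0, hn1mem]
    -- the two consecutive costs vanish
    have hs0 := hstep p0 hNp0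
    have hs1 := hstep (p0 + 1) (by omega)
    have hm1 : y (S.ξ (p0 + 1) ω) ≤ y (S.ξ p1 ω) := hmono (p0 + 1) p1 (by omega) (by omega)
    have hm2 : y (S.ξ (p0 + 2) ω) ≤ y (S.ξ p1 ω) := hmono (p0 + 2) p1 (by omega) (by omega)
    have hcn0 := hcnn (S.ξ p0 ω) (S.ξ (p0 + 1) ω)
    have hcn1 := hcnn (S.ξ (p0 + 1) ω) (S.ξ (p0 + 2) ω)
    have hc0 : c (S.ξ p0 ω) (S.ξ (p0 + 1) ω) = 0 := by
      have : p0 + 1 + 1 = p0 + 2 := by omega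
      linarith
    have hc1 : c (S.ξ (p0 + 1) ω) (S.ξ (p0 + 2) ω) = 0 := by
      have h21 : y (S.ξ (p0 + 2) ω) = y (S.ξ (p0 + 1) ω)
          + c (S.ξ (p0 + 1) ω) (S.ξ (p0 + 2) ω) := hs1
      linarith
    -- derive the contradiction
    have h21 : S.ξ (p0 + 1) ω ≠ S.ξ p0 ω := S.switch_ne p0 ω (hω p0)
    have h32 : S.ξ (p0 + 2) ω ≠ S.ξ (p0 + 1) ω := S.switch_ne (p0 + 1) ω (hω (p0 + 1))
    rw [hc] at hc0 hc1
    simp only at hc0 hc1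
    by_cases h31 : S.ξ (p0 + 2) ω = S.ξ p0 ω
    · have halpha := H.g_alpha (S.ξ p0 ω) (S.ξ (p0 + 1) ω) (Ne.symm h21) 0 h0T 0
      rw [h31] at hc1
      linarith
    · have htri := H.g_triangle (S.ξ p0 ω) (S.ξ (p0 + 1) ω) (S.ξ (p0 + 2) ω)
        h21 h31 h32 0 h0T 0
      have hnn := H.g_nonneg (S.ξ p0 ω) (S.ξ (p0 + 2) ω) 0 h0T 0
      linarith
  rw [hempty]
  exact measure_empty


end Switching

end
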